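/- Let g : ℝ → ℝ be differentiable and suppose m : ℝ → ℝ is differentiable such that the function (v,r) ↦ m(v) satisfies v·m'(v) − m(v)·(3g(v)r + 1) + g(v)r² + g'(v)r³ = 0 for all v and all r > 0. Then g ≡ 0 and m(v) = λ·v for some constant λ. -/

import Mathlib

/-- Auxiliary: from the ODE `v·m'(v) = m(v)` for all `v`, conclude `m(v) = m(1)·v` for `v > 0`. -/
lemma ode_pos (m : ℝ → ℝ) (hm : Differentiable ℝ m)
    (hode : ∀ v : ℝ, v * deriv m v - m v = 0) :
    ∀ v : ℝ, 0 < v → m v = m 1 * v := by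
  have key : ∀ t : ℝ, m (Real.exp t) * Real.exp (-t) = m 1 := by
    have hF : ∀ t : ℝ, deriv (fun t => m (Real.exp t) * Real.exp (-t)) t = 0 := by
      intro t
      have h1 : HasDerivAt (fun t => m (Real.exp t)) (deriv m (Real.exp t) * Real.exp t) t :=
        (hm.differentiableAt.hasDerivAt).comp t (Real.hasDerivAt_exp t)
      have h2 : HasDerivAt (fun t => Real.exp (-t)) (-Real.exp (-t)) t := by
        exact ((Real.hasDerivAt_exp (-t)).comp t ((hasDerivAt_id t).neg)).congr_deriv (by ring)
      have h3 := h1.mul h2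
      have := hode (Real.exp t)
      rw [show (fun t => m (Real.exp t) * Real.exp (-t)) = ((fun t => m (Real.exp t)) * fun t => Real.exp (-t)) from rfl, h3.deriv]
      nlinarith [Real.exp_pos t, Real.exp_pos (-t), Real.exp_neg t,
        mul_pos (Real.exp_pos t) (Real.exp_pos (-t))]
    have hdiff : Differentiable ℝ (fun t => m (Real.exp t) * Real.exp (-t)) := by
      exact (hm.comp (Real.differentiable_exp)).mul
        (Real.differentiable_exp.comp differentiable_neg)
    intro t
    have := is_const_of_deriv_eq_zero hdiff hF t 0
    simpa using this
  intro v hv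
  have := key (Real.log v)
  rw [Real.exp_log hv] at this
  have hex : Real.exp (-Real.log v) = v⁻¹ := by
    rw [Real.exp_neg, Real.exp_log hv]
  rw [hex] at this
  field_simp at this
  linarith [this]

/-- If `m = m(v)` satisfies the master conformal Killing equation
`v·m' − m·(3g r + 1) + g r² + g' r³ = 0` for all `v` and `r > 0`, then `g ≡ 0`
and `m(v) = λ·v`. -/
theorem stmt_7 (g m : ℝ → ℝ) (hg : Differentiable ℝ g) (hm : Differentiable ℝ m)
    (h : ∀ v r : ℝ, 0 < r →
      v * deriv m v - m v * (3 * g v * r + 1) + g v * r ^ 2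
        + deriv g v * r ^ 3 = 0) :
    (∀ v : ℝ, g v = 0) ∧ ∃ lam : ℝ, ∀ v : ℝ, m v = lam * v := by
  -- coefficient extraction via r = 1,2,3,4
  have hcoef : ∀ v : ℝ, g v = 0 ∧ v * deriv m v - m v = 0 := by
    intro v
    have e1 := h v 1 one_pos
    have e2 := h v 2 two_pos
    have e3 := h v 3 (by norm_num)
    have e4 := h v 4 (by norm_num)
    constructor
    · nlinarith [e1, e2, e3, e4]
    · nlinarith [e1, e2, e3, e4]
  have hgz : ∀ v : ℝ, g v = 0 := fun v => (hcoef v).1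
  have hode : ∀ v : ℝ, v * deriv m v - m v = 0 := fun v => (hcoef v).2
  refine ⟨hgz, deriv m 0, ?_⟩
  have hm0 : m 0 = 0 := by have := hode 0; linarith
  -- positive side
  have hpos : ∀ v : ℝ, 0 < v → m v = m 1 * v := ode_pos m hm hode
  -- negative side : apply ode_pos to n v = m (-v)
  have hneg : ∀ v : ℝ, v < 0 → m v = -m (-1) * v := by
    set n : ℝ → ℝ := fun v => m (-v) with hn
    have hdn : Differentiable ℝ n := hm.comp differentiable_neg
    have hoden : ∀ v : ℝ, v * deriv n v - n v = 0 := by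
      intro v
      have hd : HasDerivAt n (-deriv m (-v)) v := by
        exact ((hm.differentiableAt.hasDerivAt (x := -v)).comp v ((hasDerivAt_id v).neg)).congr_deriv (by ring)
      rw [hd.deriv]
      have := hode (-v)
      simp only [hn]
      linarith
    intro v hv
    have := ode_pos n hdn hoden (-v) (by linarith)
    simp only [hn, neg_neg] at this
    rw [this]; ring
  -- identify slopes with deriv m 0 using one-sided derivatives
  have hderivIci : derivWithin m (Set.Ici 0) 0 = deriv m 0 :=
    (hm.differentiableAt.hasDerivAt.hasDerivWithinAt).derivWithin (uniqueDiffOn_Ici 0 0 Set.self_mem_Ici)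
  have hderivIic : derivWithin m (Set.Iic 0) 0 = deriv m 0 :=
    (hm.differentiableAt.hasDerivAt.hasDerivWithinAt).derivWithin (uniqueDiffOn_Iic 0 0 Set.self_mem_Iic)
  have hp : m 1 = deriv m 0 := by
    have heq : Set.EqOn m (fun v => m 1 * v) (Set.Ici 0) := by
      intro x hx
      rcases eq_or_lt_of_le (Set.mem_Ici.mp hx) with h0 | h0
      · simp [← h0, hm0]
      · exact hpos x h0
    have h1 : HasDerivWithinAt (fun v : ℝ => m 1 * v) (m 1) (Set.Ici 0) 0 := by
      simpa using ((hasDerivAt_id (0:ℝ)).const_mul (m 1)).hasDerivWithinAt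
    have h2 : HasDerivWithinAt m (m 1) (Set.Ici 0) 0 :=
      h1.congr heq (by simp [hm0])
    have := h2.derivWithin (uniqueDiffOn_Ici 0 0 Set.self_mem_Ici)
    rw [this] at hderivIci; exact hderivIci
  have hq : -m (-1) = deriv m 0 := by
    have heq : Set.EqOn m (fun v => -m (-1) * v) (Set.Iic 0) := by
      intro x hx
      rcases eq_or_lt_of_le (Set.mem_Iic.mp hx) with h0 | h0
      · simp [h0, hm0]
      · exact hneg x h0
    have h1 : HasDerivWithinAt (fun v : ℝ => -m (-1) * v) (-m (-1)) (Set.Iic 0) 0 := by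
      simpa using ((hasDerivAt_id (0:ℝ)).const_mul (-m (-1))).hasDerivWithinAt
    have h2 : HasDerivWithinAt m (-m (-1)) (Set.Iic 0) 0 :=
      h1.congr heq (by simp [hm0])
    have := h2.derivWithin (uniqueDiffOn_Iic 0 0 Set.self_mem_Iic)
    rw [this] at hderivIic; exact hderivIic
  intro v
  rcases lt_trichotomy v 0 with hv | hv | hv
  · rw [hneg v hv, hq]
  · simp [hv, hm0]
  · rw [hpos v hv, hp]
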